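/- Over a finite field F, for every r ≥ 0 the number of n^d × n^d matrices over F with PT-rank at most r is at most (r + 2^d)^{2^d} · |F|^{2 r n^d}. -/

import Mathlib

open Matrix BigOperators

/-- The `κ`-partial transpose of an `n^d × n^d` matrix (indexed by tuples in `[n]^d`). -/
def ptrans {F : Type*} [Field F] {n d : ℕ} (κ : Finset (Fin d))
    (M : Matrix (Fin d → Fin n) (Fin d → Fin n) F) :
    Matrix (Fin d → Fin n) (Fin d → Fin n) F :=
  fun i j => M (fun k => if k ∈ κ then j k else i k) (fun k => if k ∈ κ then i k else j k)

/-- A matrix is PT-basic if some partial transpose of it has rank 1. -/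
def IsPTBasic {F : Type*} [Field F] {n d : ℕ}
    (M : Matrix (Fin d → Fin n) (Fin d → Fin n) F) : Prop :=
  ∃ κ : Finset (Fin d), (ptrans κ M).rank = 1

/-- The PT-rank of `M`: the minimum number of PT-basic matrices summing to `M`. -/
noncomputable def PTrank {F : Type*} [Field F] {n d : ℕ}
    (M : Matrix (Fin d → Fin n) (Fin d → Fin n) F) : ℕ :=
  sInf { r | ∃ P : Fin r → Matrix (Fin d → Fin n) (Fin d → Fin n) F,
    (∀ i, IsPTBasic (P i)) ∧ M = ∑ i, P i }

section Aux

variable {F : Type*} [Field F]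

theorem rank_one_factor {m : Type*} [Fintype m] [DecidableEq m]
    (M : Matrix m m F) (h : M.rank = 1) : ∃ u v : m → F, M = vecMulVec u v := by
  classical
  have h' : Module.finrank F (LinearMap.range M.mulVecLin) = 1 := h
  rw [finrank_eq_one_iff'] at h'
  obtain ⟨⟨u, hu⟩, hu0, hspan⟩ := h'
  refine ⟨u, fun j => ?_, ?_⟩
  · exact Classical.choose (hspan ⟨M.mulVec (Pi.single j 1), LinearMap.mem_range_self _ _⟩)
  · ext i j
    have hc := Classical.choose_spec (hspan ⟨M.mulVec (Pi.single j 1), LinearMap.mem_range_self _ _⟩)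
    have h2 : (Classical.choose (hspan ⟨M.mulVec (Pi.single j 1),
        LinearMap.mem_range_self _ _⟩) • u) i = M.mulVec (Pi.single j 1) i := by
      have := congrArg Subtype.val hc
      exact congrFun this i
    simp only [Matrix.mulVec_single, mul_one] at h2
    simp only [Pi.smul_apply, smul_eq_mul] at h2
    simp only [MulOpposite.op_one, one_smul, Matrix.col_apply] at h2
    simp [vecMulVec_apply, mul_comm, ← h2]

theorem rank_vecMulVec_eq_one {m : Type*} [Fintype m] [DecidableEq m]
    {u v : m → F} (hu : u ≠ 0) (hv : v ≠ 0) : (vecMulVec u v).rank = 1 := by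
  classical
  have hmv : ∀ x : m → F, (vecMulVec u v).mulVec x = (v ⬝ᵥ x) • u := by
    intro x
    ext i
    simp only [Matrix.mulVec, vecMulVec_apply, dotProduct, Pi.smul_apply, smul_eq_mul,
      Finset.sum_mul]
    exact Finset.sum_congr rfl fun j _ => by ring
  have hle : (vecMulVec u v).rank ≤ 1 := by
    have hsub : LinearMap.range (vecMulVec u v).mulVecLin ≤ Submodule.span F {u} := by
      rintro y ⟨x, rfl⟩
      rw [Matrix.mulVecLin_apply, hmv]
      exact Submodule.smul_mem _ _ (Submodule.mem_span_singleton_self u)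
    calc (vecMulVec u v).rank ≤ Module.finrank F (Submodule.span F {u}) :=
          Submodule.finrank_mono hsub
      _ = 1 := finrank_span_singleton hu
  have hne : (vecMulVec u v).rank ≠ 0 := by
    intro h0
    obtain ⟨b, hb⟩ : ∃ b, v b ≠ 0 := by
      by_contra hc
      push_neg at hc
      exact hv (funext hc)
    have hmem : (v b) • u ∈ LinearMap.range (vecMulVec u v).mulVecLin := by
      refine ⟨Pi.single b 1, ?_⟩
      rw [Matrix.mulVecLin_apply, hmv]
      simp
    have hbot : LinearMap.range (vecMulVec u v).mulVecLin = ⊥ :=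
      Submodule.finrank_eq_zero.mp h0
    rw [hbot, Submodule.mem_bot] at hmem
    exact hu (by simpa [smul_eq_zero, hb] using hmem)
  omega

theorem ptrans_ptrans {n d : ℕ} (κ : Finset (Fin d))
    (M : Matrix (Fin d → Fin n) (Fin d → Fin n) F) : ptrans κ (ptrans κ M) = M := by
  ext i j
  show M _ _ = M i j
  congr 1 <;> funext k <;> by_cases h : k ∈ κ <;> simp [h]

theorem ptrans_empty {n d : ℕ} (M : Matrix (Fin d → Fin n) (Fin d → Fin n) F) :
    ptrans (∅ : Finset (Fin d)) M = M := by
  ext i j; simp [ptrans]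

theorem ptrans_sum {n d : ℕ} (κ : Finset (Fin d)) {ι : Type*} (s : Finset ι)
    (f : ι → Matrix (Fin d → Fin n) (Fin d → Fin n) F) :
    ptrans κ (∑ i ∈ s, f i) = ∑ i ∈ s, ptrans κ (f i) := by
  ext i j
  simp [ptrans, Matrix.sum_apply]

theorem exists_decomp {n d : ℕ} (M : Matrix (Fin d → Fin n) (Fin d → Fin n) F) :
    ∃ k : ℕ, ∃ P : Fin k → Matrix (Fin d → Fin n) (Fin d → Fin n) F,
      (∀ i, ∃ κ : Finset (Fin d), (ptrans κ (P i)).rank = 1) ∧ M = ∑ i, P i := by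
  classical
  let m := (Fin d → Fin n)
  set s : Finset (m × m) := Finset.univ.filter (fun p => M p.1 p.2 ≠ 0) with hs
  set G : m × m → Matrix m m F :=
    fun p => vecMulVec (Pi.single p.1 (M p.1 p.2)) (Pi.single p.2 1) with hG
  have hrank : ∀ p ∈ s, ∃ κ : Finset (Fin d), (ptrans κ (G p)).rank = 1 := by
    intro p hp
    rw [hs, Finset.mem_filter] at hp
    refine ⟨∅, ?_⟩
    rw [ptrans_empty]
    exact rank_vecMulVec_eq_one
      (fun h => hp.2 (by simpa using congrFun h p.1))
      (fun h => one_ne_zero (α := F) (by simpa using congrFun h p.2))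
  refine ⟨s.card, fun i => G (s.equivFin.symm i), fun i => hrank _ (s.equivFin.symm i).2, ?_⟩
  · have h1 : ∑ i : Fin s.card, G (s.equivFin.symm i) = ∑ p ∈ s, G p := by
      rw [← Finset.sum_coe_sort s G]
      exact Fintype.sum_equiv s.equivFin.symm _ _ (fun i => rfl)
    rw [h1]
    have h2 : ∑ p ∈ s, G p = ∑ p : m × m, G p := by
      refine Finset.sum_subset (Finset.subset_univ s) ?_
      intro p _ hp
      rw [hs, Finset.mem_filter] at hp
      push_neg at hp
      have : M p.1 p.2 = 0 := hp (Finset.mem_univ p)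
      ext a b
      simp [hG, vecMulVec_apply, this, Pi.single_apply]
    rw [h2]
    ext a b
    rw [Matrix.sum_apply]
    simp [hG, vecMulVec_apply, Pi.single_apply, Fintype.sum_prod_type]
    rw [Finset.sum_comm]; simp
    rw [Finset.sum_eq_single b (fun x _ hx => if_neg (Ne.symm hx)) (by simp), if_pos rfl,
      Finset.sum_eq_single a (fun x _ hx => if_neg (Ne.symm hx)) (by simp), if_pos rfl]

end Aux

/-- Over a finite field `F`, the number of `n^d × n^d` matrices of PT-rank at most `r` is
at most `(r + 2^d)^{2^d} · |F|^{2 r n^d}`. -/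
theorem stmt9 {F : Type*} [Field F] [Fintype F] (n d r : ℕ) :
    Nat.card {M : Matrix (Fin d → Fin n) (Fin d → Fin n) F // PTrank M ≤ r} ≤
      (r + 2 ^ d) ^ (2 ^ d) * (Fintype.card F) ^ (2 * r * n ^ d) := by
  classical
  set q := Fintype.card F with hq
  set N := n ^ d with hN
  -- the encoding type
  let T := (ρ : {ρ : Finset (Fin d) → Fin (r+1) // ∑ κ, (ρ κ : ℕ) ≤ r}) ×
    (Π κ : Finset (Fin d), Fin (ρ.1 κ) → ((Fin d → Fin n) → F) × ((Fin d → Fin n) → F))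
  let g : T → Matrix (Fin d → Fin n) (Fin d → Fin n) F := fun t =>
    ∑ κ : Finset (Fin d), ptrans κ (∑ i : Fin (t.1.1 κ), vecMulVec (t.2 κ i).1 (t.2 κ i).2)
  -- every matrix of PT-rank ≤ r is in the image of g
  have hsurj : ∀ M : Matrix (Fin d → Fin n) (Fin d → Fin n) F, PTrank M ≤ r →
      ∃ t : T, g t = M := by
    intro M hM
    obtain ⟨k0, P0, hb0, hs0⟩ := exists_decomp M
    have hmem : PTrank M ∈ { r | ∃ P : Fin r → Matrix (Fin d → Fin n) (Fin d → Fin n) F,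
        (∀ i, IsPTBasic (P i)) ∧ M = ∑ i, P i } :=
      Nat.sInf_mem ⟨k0, P0, hb0, hs0⟩
    obtain ⟨P, hb, hsum⟩ := hmem
    choose c hc using hb
    choose u v huv using fun i => rank_one_factor _ (hc i)
    let ρ' : Finset (Fin d) → ℕ := fun κ => Fintype.card {i // c i = κ}
    have hsum_ρ : ∑ κ, ρ' κ = PTrank M := by
      have := Fintype.sum_fiberwise c (fun _ => (1 : ℕ))
      simpa [ρ', Finset.card_univ] using this
    have hle : ∀ κ, ρ' κ ≤ r := by
      intro κ
      calc ρ' κ ≤ ∑ κ', ρ' κ' :=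
            Finset.single_le_sum (fun _ _ => Nat.zero_le _) (Finset.mem_univ κ)
        _ = PTrank M := hsum_ρ
        _ ≤ r := hM
    let ρ : Finset (Fin d) → Fin (r+1) := fun κ => ⟨ρ' κ, Nat.lt_succ_of_le (hle κ)⟩
    have hρ : ∑ κ, ((ρ κ : ℕ)) ≤ r := by
      simpa [ρ, hsum_ρ] using hM
    let e : ∀ κ : Finset (Fin d), Fin (ρ' κ) ≃ {i // c i = κ} :=
      fun κ => (Fintype.equivFin {i // c i = κ}).symm
    refine ⟨⟨⟨ρ, hρ⟩, fun κ j => (u (e κ j), v (e κ j))⟩, ?_⟩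
    show (∑ κ : Finset (Fin d),
      ptrans κ (∑ j : Fin (ρ' κ), vecMulVec (u (e κ j)) (v (e κ j)))) = M
    have hinner : ∀ κ : Finset (Fin d),
        ptrans κ (∑ j : Fin (ρ' κ), vecMulVec (u (e κ j)) (v (e κ j)))
          = ∑ i : {i // c i = κ}, P i.1 := by
      intro κ
      have h1 : ∑ j : Fin (ρ' κ), vecMulVec (u (e κ j)) (v (e κ j))
          = ∑ i : {i // c i = κ}, vecMulVec (u i.1) (v i.1) :=
        Fintype.sum_equiv (e κ) _ _ (fun j => rfl)
      rw [h1, ptrans_sum]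
      refine Finset.sum_congr rfl fun i _ => ?_
      obtain ⟨i, rfl⟩ := i
      rw [← huv i, ptrans_ptrans]
    rw [Finset.sum_congr rfl (fun κ _ => hinner κ)]
    rw [Fintype.sum_fiberwise c (fun i => P i)]
    exact hsum.symm
  -- injectivity of the encoding
  let f : {M : Matrix (Fin d → Fin n) (Fin d → Fin n) F // PTrank M ≤ r} → T :=
    fun M => Classical.choose (hsurj M.1 M.2)
  have hgf : ∀ M, g (f M) = M.1 := fun M => Classical.choose_spec (hsurj M.1 M.2)
  have hinj : Function.Injective f := by
    intro M M' h
    have : (M : Matrix (Fin d → Fin n) (Fin d → Fin n) F) = M' := by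
      rw [← hgf M, ← hgf M', h]
    exact Subtype.ext this
  calc Nat.card {M : Matrix (Fin d → Fin n) (Fin d → Fin n) F // PTrank M ≤ r}
      ≤ Nat.card T := Nat.card_le_card_of_injective f hinj
    _ = Fintype.card T := Nat.card_eq_fintype_card
    _ ≤ (r + 2 ^ d) ^ (2 ^ d) * q ^ (2 * r * N) := by
      have hq1 : 1 ≤ q := Fintype.card_pos
      have hcard_m : Fintype.card (Fin d → Fin n) = N := by
        simp [hN, Fintype.card_fun]
      have hstep : ∀ ρ : {ρ : Finset (Fin d) → Fin (r+1) // ∑ κ, (ρ κ : ℕ) ≤ r},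
          Fintype.card (Π κ : Finset (Fin d),
            Fin (ρ.1 κ) → ((Fin d → Fin n) → F) × ((Fin d → Fin n) → F)) ≤ q ^ (2 * r * N) := by
        intro ρ
        have h1 : Fintype.card (Π κ : Finset (Fin d),
            Fin (ρ.1 κ) → ((Fin d → Fin n) → F) × ((Fin d → Fin n) → F))
            = ∏ κ : Finset (Fin d), (q ^ (2 * N)) ^ ((ρ.1 κ : ℕ)) := by
          rw [Fintype.card_pi]
          refine Finset.prod_congr rfl fun κ _ => ?_
          rw [Fintype.card_fun, Fintype.card_prod, Fintype.card_fun, hcard_m,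
            Fintype.card_fin, ← hq, ← pow_add, ← two_mul]
        rw [h1, Finset.prod_pow_eq_pow_sum]
        calc (q ^ (2 * N)) ^ (∑ κ : Finset (Fin d), (ρ.1 κ : ℕ))
            ≤ (q ^ (2 * N)) ^ r := Nat.pow_le_pow_right (Nat.one_le_pow _ _ hq1) ρ.2
          _ = q ^ (2 * r * N) := by rw [← pow_mul]; ring_nf
      calc Fintype.card T
          = ∑ ρ : {ρ : Finset (Fin d) → Fin (r+1) // ∑ κ, (ρ κ : ℕ) ≤ r},
            Fintype.card (Π κ : Finset (Fin d),
              Fin (ρ.1 κ) → ((Fin d → Fin n) → F) × ((Fin d → Fin n) → F)) :=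
            Fintype.card_sigma
        _ ≤ ∑ _ρ : {ρ : Finset (Fin d) → Fin (r+1) // ∑ κ, (ρ κ : ℕ) ≤ r}, q ^ (2 * r * N) :=
            Finset.sum_le_sum fun ρ _ => hstep ρ
        _ = Fintype.card {ρ : Finset (Fin d) → Fin (r+1) // ∑ κ, (ρ κ : ℕ) ≤ r}
              * q ^ (2 * r * N) := by
            rw [Finset.sum_const, Finset.card_univ, smul_eq_mul]
        _ ≤ (r + 1) ^ (2 ^ d) * q ^ (2 * r * N) := by
            refine Nat.mul_le_mul_right _ ?_
            calc Fintype.card {ρ : Finset (Fin d) → Fin (r+1) // ∑ κ, (ρ κ : ℕ) ≤ r}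
                ≤ Fintype.card (Finset (Fin d) → Fin (r+1)) := Fintype.card_subtype_le _
              _ = (r + 1) ^ (2 ^ d) := by
                  rw [Fintype.card_fun, Fintype.card_fin, Fintype.card_finset, Fintype.card_fin]
        _ ≤ (r + 2 ^ d) ^ (2 ^ d) * q ^ (2 * r * N) :=
            Nat.mul_le_mul_right _ (Nat.pow_le_pow_left
              (Nat.add_le_add_left Nat.one_le_two_pow r) _)
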